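/- Let Θ : ℝ² → ℝ be C² with 0 < Θ(x) < π for every x ∈ ℝ², and suppose Θ satisfies the sine-Gordon equation ∂²Θ/∂x¹∂x² (x) = sin(Θ(x)) for all x ∈ ℝ². Then for every a > 0, ∫_{[−a,a]×[−a,a]} sin(Θ(x¹, x²)) d(x¹, x²) = Θ(a,a) − Θ(−a,a) − Θ(a,−a) + Θ(−a,−a), and consequently this integral is strictly less than 2π for every a > 0. -/

import Mathlib

open MeasureTheory Real

/-- If `Θ : ℝ² → ℝ` is `C²`, with values strictly between `0` and `π`, and
satisfies the sine-Gordon equation `∂²Θ/∂x¹∂x² = sin Θ`, then the integral of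
`sin Θ` over `[-a,a] × [-a,a]` equals `Θ(a,a) - Θ(-a,a) - Θ(a,-a) + Θ(-a,-a)`,
and hence is strictly less than `2π`. -/
theorem sineGordon_integral_lt_two_pi
    (Θ : ℝ × ℝ → ℝ) (hΘ : ContDiff ℝ 2 Θ)
    (hrange : ∀ x : ℝ × ℝ, 0 < Θ x ∧ Θ x < π)
    (hpde : ∀ x : ℝ × ℝ,
      deriv (fun s : ℝ => deriv (fun t : ℝ => Θ (s, t)) x.2) x.1 = Real.sin (Θ x)) :
    ∀ a : ℝ, 0 < a →
      (∫ x in Set.Icc (-a) a ×ˢ Set.Icc (-a) a, Real.sin (Θ x))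
          = Θ (a, a) - Θ (-a, a) - Θ (a, -a) + Θ (-a, -a) ∧
      (∫ x in Set.Icc (-a) a ×ˢ Set.Icc (-a) a, Real.sin (Θ x)) < 2 * π := by
  intro a ha
  have hdiff : Differentiable ℝ Θ := hΘ.differentiable (by norm_num)
  set F : ℝ × ℝ → ℝ := fun p => fderiv ℝ Θ p (0, 1) with hFdef
  have hF1 : ∀ s t : ℝ, HasDerivAt (fun t => Θ (s, t)) (F (s, t)) t := by
    intro s t
    have h1 : HasDerivAt (fun t : ℝ => ((s : ℝ), t)) ((0 : ℝ), (1 : ℝ)) t :=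
      HasDerivAt.prodMk (hasDerivAt_const t s) (hasDerivAt_id t)
    exact (hdiff (s, t)).hasFDerivAt.comp_hasDerivAt t h1
  have hC1 : ContDiff ℝ 1 F := by
    have h := hΘ.fderiv_right (m := 1) (by norm_num)
    exact h.clm_apply contDiff_const
  have hFcont : Continuous F := hC1.continuous
  have hFd : Differentiable ℝ F := hC1.differentiable one_ne_zero
  have hF2 : ∀ s t : ℝ, HasDerivAt (fun s => F (s, t)) (Real.sin (Θ (s, t))) s := by
    intro s t
    have hd : DifferentiableAt ℝ (fun s => F (s, t)) s :=
      DifferentiableAt.comp (f := fun s : ℝ => (s, t)) s (hFd (s, t)) (DifferentiableAt.prodMk differentiableAt_id (differentiableAt_const t))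
    have hpd := hpde (s, t)
    have heq : (fun s => deriv (fun t => Θ (s, t)) t) = fun s => F (s, t) :=
      funext fun s => (hF1 s t).deriv
    rw [heq] at hpd
    exact hpd ▸ hd.hasDerivAt
  have hcont : Continuous fun x : ℝ × ℝ => Real.sin (Θ x) :=
    Real.continuous_sin.comp hΘ.continuous
  have key1 : ∀ t : ℝ, (∫ s in (-a)..a, Real.sin (Θ (s, t))) = F (a, t) - F (-a, t) := by
    intro t
    exact intervalIntegral.integral_eq_sub_of_hasDerivAt (fun s _ => hF2 s t)
      ((hcont.comp (continuous_id.prodMk continuous_const)).intervalIntegrable _ _)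
  have key2 : ∀ c : ℝ, (∫ t in (-a)..a, F (c, t)) = Θ (c, a) - Θ (c, -a) := by
    intro c
    exact intervalIntegral.integral_eq_sub_of_hasDerivAt (fun t _ => hF1 c t)
      ((hFcont.comp (continuous_const.prodMk continuous_id)).intervalIntegrable _ _)
  have hle : (-a) ≤ a := by linarith
  have hint : IntegrableOn (fun x : ℝ × ℝ => Real.sin (Θ x))
      (Set.Icc (-a) a ×ˢ Set.Icc (-a) a) :=
    hcont.continuousOn.integrableOn_compact (isCompact_Icc.prod isCompact_Icc)
  have hf : Integrable (fun x : ℝ × ℝ => Real.sin (Θ x))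
      ((volume.restrict (Set.Icc (-a) a)).prod (volume.restrict (Set.Icc (-a) a))) := by
    rw [Measure.prod_restrict, ← Measure.volume_eq_prod]
    exact hint
  have hswap := MeasureTheory.integral_prod_symm _ hf
  have hEq : (∫ x in Set.Icc (-a) a ×ˢ Set.Icc (-a) a, Real.sin (Θ x))
      = ∫ t in Set.Icc (-a) a, ∫ s in Set.Icc (-a) a, Real.sin (Θ (s, t)) := by
    rw [← hswap, Measure.prod_restrict, ← Measure.volume_eq_prod]
  have hIcc : ∀ g : ℝ → ℝ, (∫ t in Set.Icc (-a) a, g t) = ∫ t in (-a)..a, g t := by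
    intro g
    rw [intervalIntegral.integral_of_le hle, integral_Icc_eq_integral_Ioc]
  have main : (∫ x in Set.Icc (-a) a ×ˢ Set.Icc (-a) a, Real.sin (Θ x))
      = Θ (a, a) - Θ (-a, a) - Θ (a, -a) + Θ (-a, -a) := by
    rw [hEq, hIcc]
    have h1 : (∫ t in (-a)..a, ∫ s in Set.Icc (-a) a, Real.sin (Θ (s, t)))
        = ∫ t in (-a)..a, (F (a, t) - F (-a, t)) := by
      apply intervalIntegral.integral_congr
      intro t _
      show (∫ s in Set.Icc (-a) a, Real.sin (Θ (s, t))) = F (a, t) - F (-a, t)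
      rw [hIcc]
      exact key1 t
    have hInt : ∀ c : ℝ, IntervalIntegrable (fun t => F (c, t)) volume (-a) a := fun c =>
      (hFcont.comp (continuous_const.prodMk continuous_id)).intervalIntegrable _ _
    rw [h1, intervalIntegral.integral_sub (hInt a) (hInt (-a)), key2, key2]
    ring
  refine ⟨main, ?_⟩
  rw [main]
  have h1 := hrange (a, a)
  have h2 := hrange (-a, a)
  have h3 := hrange (a, -a)
  have h4 := hrange (-a, -a)
  linarith [h1.1, h1.2, h2.1, h2.2, h3.1, h3.2, h4.1, h4.2]
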